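/- An involution avoids 4321 and 312 if and only if it avoids 4321 and 231; moreover the number of involutions of {1,...,n} avoiding both 4321 and 312 equals t_{n+2}, where (t_n) is the Tribonacci sequence defined by t_0 = 0, t_1 = 0, t_2 = 1, and t_{n+3} = t_{n+2} + t_{n+1} + t_n. -/

import Mathlib

def Av4321 {n : ℕ} (σ : Equiv.Perm (Fin n)) : Prop :=
  ¬ ∃ i j k l : Fin n, i < j ∧ j < k ∧ k < l ∧ σ l < σ k ∧ σ k < σ j ∧ σ j < σ i

def Av312 {n : ℕ} (σ : Equiv.Perm (Fin n)) : Prop :=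
  ¬ ∃ i j k : Fin n, i < j ∧ j < k ∧ σ j < σ k ∧ σ k < σ i

def Av231 {n : ℕ} (σ : Equiv.Perm (Fin n)) : Prop :=
  ¬ ∃ i j k : Fin n, i < j ∧ j < k ∧ σ k < σ i ∧ σ i < σ j

def trib : ℕ → ℕ
  | 0 => 0
  | 1 => 0
  | 2 => 1
  | (n + 3) => trib (n + 2) + trib (n + 1) + trib n

open Equiv

variable {k m : ℕ} (π : Equiv.Perm (Fin k)) (σ : Equiv.Perm (Fin m))

def glue : Equiv.Perm (Fin (k+m)) :=
  finSumFinEquiv.permCongr (Equiv.sumCongr π σ)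

lemma glue_castAdd (i : Fin k) :
    glue π σ (Fin.castAdd m i) = Fin.castAdd m (π i) := by
  simp [glue, Equiv.permCongr_apply]

lemma glue_natAdd (i : Fin m) :
    glue π σ (Fin.natAdd k i) = Fin.natAdd k (σ i) := by
  simp [glue, Equiv.permCongr_apply]

lemma glue_val_lt (x : Fin (k+m)) (h : (x:ℕ) < k) :
    (glue π σ x : ℕ) = (π ⟨x, h⟩ : ℕ) := by
  have hx : x = Fin.castAdd m ⟨x, h⟩ := by ext; simp
  conv_lhs => rw [hx]
  rw [glue_castAdd]; simp

lemma glue_val_ge (x : Fin (k+m)) (h : k ≤ (x:ℕ)) :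
    (glue π σ x : ℕ) = k + (σ ⟨(x:ℕ) - k, by have := x.isLt; omega⟩ : ℕ) := by
  have hx : x = Fin.natAdd k ⟨(x:ℕ) - k, by have := x.isLt; omega⟩ := by ext; simp; omega
  conv_lhs => rw [hx]
  rw [glue_natAdd]; simp

lemma glue_val_lt_iff (x : Fin (k+m)) : (glue π σ x : ℕ) < k ↔ (x : ℕ) < k := by
  constructor
  · intro h
    by_contra hx
    push_neg at hx
    rw [glue_val_ge π σ x hx] at h
    omega
  · intro h
    rw [glue_val_lt π σ x h]
    exact (π ⟨x, h⟩).isLt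




lemma av312_glue (hπ : Av312 π) (hσ : Av312 σ) : Av312 (glue π σ) := by
  rintro ⟨a, b, c, hab, hbc, h1, h2⟩
  rw [Fin.lt_def] at hab hbc h1 h2
  by_cases ha : (a : ℕ) < k
  · -- value at a is < k, so values at b,c are < k hence b,c < k : pattern in π
    have hva : ((glue π σ) a : ℕ) < k := by rw [glue_val_lt π σ a ha]; exact (π _).isLt
    have hvc : ((glue π σ) c : ℕ) < k := by omega
    have hvb : ((glue π σ) b : ℕ) < k := by omega
    have hc : (c : ℕ) < k := (glue_val_lt_iff π σ c).mp hvc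
    have hb : (b : ℕ) < k := (glue_val_lt_iff π σ b).mp hvb
    refine hπ ⟨⟨a, ha⟩, ⟨b, hb⟩, ⟨c, hc⟩, ?_, ?_, ?_, ?_⟩ <;> rw [Fin.lt_def]
    · exact hab
    · exact hbc
    · rw [glue_val_lt π σ b hb, glue_val_lt π σ c hc] at h1; exact h1
    · rw [glue_val_lt π σ c hc, glue_val_lt π σ a ha] at h2; exact h2
  · push_neg at ha
    have hb : k ≤ (b : ℕ) := by omega
    have hc : k ≤ (c : ℕ) := by omega
    refine hσ ⟨⟨(a:ℕ)-k, by have := a.isLt; omega⟩, ⟨(b:ℕ)-k, by have := b.isLt; omega⟩,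
      ⟨(c:ℕ)-k, by have := c.isLt; omega⟩, ?_, ?_, ?_, ?_⟩ <;> rw [Fin.lt_def]
    · simp; omega
    · simp; omega
    · rw [glue_val_ge π σ b hb, glue_val_ge π σ c hc] at h1; simpa using h1
    · rw [glue_val_ge π σ c hc, glue_val_ge π σ a ha] at h2; simpa using h2

lemma av4321_glue (hπ : Av4321 π) (hσ : Av4321 σ) : Av4321 (glue π σ) := by
  rintro ⟨a, b, c, d, hab, hbc, hcd, h1, h2, h3⟩
  rw [Fin.lt_def] at hab hbc hcd h1 h2 h3
  by_cases ha : (a : ℕ) < k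
  · have hva : ((glue π σ) a : ℕ) < k := by rw [glue_val_lt π σ a ha]; exact (π _).isLt
    have hvb : ((glue π σ) b : ℕ) < k := by omega
    have hvc : ((glue π σ) c : ℕ) < k := by omega
    have hvd : ((glue π σ) d : ℕ) < k := by omega
    have hb : (b : ℕ) < k := (glue_val_lt_iff π σ b).mp hvb
    have hc : (c : ℕ) < k := (glue_val_lt_iff π σ c).mp hvc
    have hd : (d : ℕ) < k := (glue_val_lt_iff π σ d).mp hvd
    refine hπ ⟨⟨a, ha⟩, ⟨b, hb⟩, ⟨c, hc⟩, ⟨d, hd⟩, ?_, ?_, ?_, ?_, ?_, ?_⟩ <;> rw [Fin.lt_def]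
    · exact hab
    · exact hbc
    · exact hcd
    · rw [glue_val_lt π σ d hd, glue_val_lt π σ c hc] at h1; exact h1
    · rw [glue_val_lt π σ c hc, glue_val_lt π σ b hb] at h2; exact h2
    · rw [glue_val_lt π σ b hb, glue_val_lt π σ a ha] at h3; exact h3
  · push_neg at ha
    have hb : k ≤ (b : ℕ) := by omega
    have hc : k ≤ (c : ℕ) := by omega
    have hd : k ≤ (d : ℕ) := by omega
    refine hσ ⟨⟨(a:ℕ)-k, by have := a.isLt; omega⟩, ⟨(b:ℕ)-k, by have := b.isLt; omega⟩,
      ⟨(c:ℕ)-k, by have := c.isLt; omega⟩, ⟨(d:ℕ)-k, by have := d.isLt; omega⟩,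
      ?_, ?_, ?_, ?_, ?_, ?_⟩ <;> rw [Fin.lt_def]
    · simp; omega
    · simp; omega
    · simp; omega
    · rw [glue_val_ge π σ d hd, glue_val_ge π σ c hc] at h1; simpa using h1
    · rw [glue_val_ge π σ c hc, glue_val_ge π σ b hb] at h2; simpa using h2
    · rw [glue_val_ge π σ b hb, glue_val_ge π σ a ha] at h3; simpa using h3


lemma av312_of_glue (h : Av312 (glue π σ)) : Av312 σ := by
  rintro ⟨a, b, c, hab, hbc, h1, h2⟩
  rw [Fin.lt_def] at hab hbc h1 h2
  refine h ⟨Fin.natAdd k a, Fin.natAdd k b, Fin.natAdd k c, ?_, ?_, ?_, ?_⟩ <;>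
    rw [Fin.lt_def] <;> simp [glue_natAdd] <;> omega

lemma av4321_of_glue (h : Av4321 (glue π σ)) : Av4321 σ := by
  rintro ⟨a, b, c, d, hab, hbc, hcd, h1, h2, h3⟩
  rw [Fin.lt_def] at hab hbc hcd h1 h2 h3
  refine h ⟨Fin.natAdd k a, Fin.natAdd k b, Fin.natAdd k c, Fin.natAdd k d, ?_, ?_, ?_, ?_, ?_, ?_⟩ <;>
    rw [Fin.lt_def] <;> simp [glue_natAdd] <;> omega

lemma invol_apply {N : ℕ} (τ : Equiv.Perm (Fin N)) (h1 : τ * τ = 1) (x : Fin N) : τ (τ x) = x := by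
  rw [← Equiv.Perm.mul_apply, h1, Equiv.Perm.one_apply]


lemma struct {N : ℕ} (τ : Equiv.Perm (Fin N)) (h1 : τ * τ = 1) (h4 : Av4321 τ) (h3 : Av312 τ)
    (z : Fin N) (hz : (z : ℕ) = 0) :
    (τ z : ℕ) ≤ 2 ∧ ((τ z : ℕ) = 2 → ∀ y : Fin N, (y : ℕ) = 1 → (τ y : ℕ) = 1) := by
  have hinv := invol_apply τ h1
  have hcm : (τ z : ℕ) < N := (τ z).isLt
  constructor
  · by_contra hc
    push_neg at hc  -- 3 ≤ τ z
    have hN : 3 ≤ N := by omega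
    set p1 : Fin N := ⟨1, by omega⟩ with hp1
    set p2 : Fin N := ⟨2, by omega⟩ with hp2
    have e1 : (p1 : ℕ) = 1 := rfl
    have e2 : (p2 : ℕ) = 2 := rfl
    have hv1c : (τ p1 : ℕ) ≠ (τ z : ℕ) := by
      intro h
      have := congrArg Fin.val (τ.injective (Fin.ext h : τ p1 = τ z))
      omega
    have hv10 : (τ p1 : ℕ) ≠ 0 := by
      intro h
      have h' : τ p1 = τ (τ z) := by rw [hinv]; exact Fin.ext (by omega)
      have := congrArg Fin.val (τ.injective h')
      omega
    have hv2c : (τ p2 : ℕ) ≠ (τ z : ℕ) := by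
      intro h
      have := congrArg Fin.val (τ.injective (Fin.ext h : τ p2 = τ z))
      omega
    have hv20 : (τ p2 : ℕ) ≠ 0 := by
      intro h
      have h' : τ p2 = τ (τ z) := by rw [hinv]; exact Fin.ext (by omega)
      have := congrArg Fin.val (τ.injective h')
      omega
    have hv12 : (τ p1 : ℕ) ≠ (τ p2 : ℕ) := by
      intro h
      have := congrArg Fin.val (τ.injective (Fin.ext h : τ p1 = τ p2))
      omega
    rcases lt_or_gt_of_ne hv1c with hB | hBgt
    · rcases lt_or_gt_of_ne hv2c with hC | hCgt
      · rcases lt_or_gt_of_ne hv12 with hlt | hgt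
        · exact h3 ⟨z, p1, p2, by rw [Fin.lt_def]; omega, by rw [Fin.lt_def]; omega,
            by rw [Fin.lt_def]; exact hlt, by rw [Fin.lt_def]; exact hC⟩
        · refine h4 ⟨z, p1, p2, τ z, by rw [Fin.lt_def]; omega, by rw [Fin.lt_def]; omega,
            by rw [Fin.lt_def]; omega, ?_, by rw [Fin.lt_def]; exact hgt, by rw [Fin.lt_def]; exact hB⟩
          rw [Fin.lt_def, hinv]
          omega
      · refine h3 ⟨p2, τ z, τ p2, by rw [Fin.lt_def]; omega, by rw [Fin.lt_def]; exact hCgt, ?_, ?_⟩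
        · rw [Fin.lt_def, hinv, hinv]; omega
        · rw [Fin.lt_def, hinv]; omega
    · refine h3 ⟨p1, τ z, τ p1, by rw [Fin.lt_def]; omega, by rw [Fin.lt_def]; exact hBgt, ?_, ?_⟩
      · rw [Fin.lt_def, hinv, hinv]; omega
      · rw [Fin.lt_def, hinv]; omega
  · intro hc y hy
    have hN : 2 < N := by omega
    have hvyc : (τ y : ℕ) ≠ 2 := by
      intro h
      have h' : τ y = τ z := Fin.ext (by omega)
      have := congrArg Fin.val (τ.injective h')
      omega
    have hvy0 : (τ y : ℕ) ≠ 0 := by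
      intro h
      have h' : τ y = τ (τ z) := by rw [hinv]; exact Fin.ext (by omega)
      have := congrArg Fin.val (τ.injective h')
      omega
    by_contra hvy1
    refine h3 ⟨y, τ z, τ y, by rw [Fin.lt_def]; omega, by rw [Fin.lt_def]; omega, ?_, ?_⟩
    · rw [Fin.lt_def, hinv, hinv]; omega
    · rw [Fin.lt_def, hinv]; omega

lemma glue_mul (π π' : Equiv.Perm (Fin k)) (σ σ' : Equiv.Perm (Fin m)) :
    glue π σ * glue π' σ' = glue (π * π') (σ * σ') := by
  ext x
  cases x using Fin.addCases with
  | left i => simp [Equiv.Perm.mul_apply, glue_castAdd]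
  | right i => simp [Equiv.Perm.mul_apply, glue_natAdd]

lemma glue_one : glue (1 : Equiv.Perm (Fin k)) (1 : Equiv.Perm (Fin m)) = 1 := by
  ext x
  cases x using Fin.addCases with
  | left i => simp [glue_castAdd]
  | right i => simp [glue_natAdd]

def Good {n : ℕ} (τ : Equiv.Perm (Fin n)) : Prop := τ * τ = 1 ∧ Av4321 τ ∧ Av312 τ

noncomputable def f (n : ℕ) : ℕ := Nat.card {τ : Equiv.Perm (Fin n) // Good τ}

lemma card_block (k m : ℕ) (π : Equiv.Perm (Fin k)) (hπ1 : π * π = 1) (hπ4 : Av4321 π)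
    (hπ3 : Av312 π) :
    Nat.card {τ : Equiv.Perm (Fin (k+m)) //
      Good τ ∧ ∀ i : Fin k, τ (Fin.castAdd m i) = Fin.castAdd m (π i)} = f m := by
  let F : {σ : Equiv.Perm (Fin m) // Good σ} →
      {τ : Equiv.Perm (Fin (k+m)) //
        Good τ ∧ ∀ i : Fin k, τ (Fin.castAdd m i) = Fin.castAdd m (π i)} :=
    fun s => ⟨glue π s.1,
      ⟨⟨by rw [glue_mul, hπ1, s.2.1, glue_one], av4321_glue π s.1 hπ4 s.2.2.1,
        av312_glue π s.1 hπ3 s.2.2.2⟩, fun i => glue_castAdd π s.1 i⟩⟩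
  have hinject : Function.Injective F := by
    rintro ⟨σ, hσ⟩ ⟨σ', hσ'⟩ h
    have h' : glue π σ = glue π σ' := congrArg Subtype.val h
    refine Subtype.ext (Equiv.ext fun i => ?_)
    have := congrArg (fun (g : Equiv.Perm (Fin (k+m))) => g (Fin.natAdd k i)) h'
    simp only [glue_natAdd] at this
    exact Fin.ext (by have := congrArg Fin.val this; simpa using this)
  have hsurj : Function.Surjective F := by
    rintro ⟨τ, hG, hB⟩
    have hinv := invol_apply τ hG.1
    have hge : ∀ x : Fin (k+m), k ≤ (x : ℕ) → k ≤ (τ x : ℕ) := by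
      intro x hx
      by_contra h
      push_neg at h
      set q : Fin k := ⟨(τ x : ℕ), h⟩ with hq
      have h1 : τ (Fin.castAdd m (π.symm q)) = Fin.castAdd m (π (π.symm q)) := hB _
      rw [Equiv.apply_symm_apply] at h1
      have h2 : Fin.castAdd m q = τ x := Fin.ext (by simp [hq])
      have h3 : Fin.castAdd m (π.symm q) = x := τ.injective (by rw [h1, h2])
      have := congrArg Fin.val h3
      simp at this
      have := (π.symm q).isLt
      omega
    have hlt : ∀ i : Fin m, (τ (Fin.natAdd k i) : ℕ) - k < m := by
      intro i; have := (τ (Fin.natAdd k i)).isLt; have := i.isLt; omega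
    let σfun : Fin m → Fin m := fun i => ⟨(τ (Fin.natAdd k i) : ℕ) - k, hlt i⟩
    have key : ∀ i : Fin m, Fin.natAdd k (σfun i) = τ (Fin.natAdd k i) := by
      intro i
      have h := hge (Fin.natAdd k i) (by simp)
      have hv : (Fin.natAdd k (σfun i) : ℕ) = k + ((τ (Fin.natAdd k i) : ℕ) - k) := rfl
      exact Fin.ext (by rw [hv]; omega)
    have invol : ∀ i, σfun (σfun i) = i := by
      intro i
      have h := key (σfun i)
      rw [key i, hinv] at h
      exact Fin.ext (by have := congrArg Fin.val h; simpa using this)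
    let σ : Equiv.Perm (Fin m) := ⟨σfun, σfun, invol, invol⟩
    have hτ : τ = glue π σ := by
      ext x
      cases x using Fin.addCases with
      | left i => rw [glue_castAdd]; exact congrArg Fin.val (hB i)
      | right i => rw [glue_natAdd]; exact congrArg Fin.val (key i).symm
    have hGσ : Good σ := by
      refine ⟨Equiv.ext fun i => ?_, ?_, ?_⟩
      · exact invol i
      · exact av4321_of_glue π σ (hτ ▸ hG.2.1)
      · exact av312_of_glue π σ (hτ ▸ hG.2.2)
    exact ⟨⟨σ, hGσ⟩, Subtype.ext hτ.symm⟩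
  rw [f]
  exact (Nat.card_congr (Equiv.ofBijective F ⟨hinject, hsurj⟩)).symm


instance {n : ℕ} : DecidablePred (@Av4321 n) := fun σ => by unfold Av4321; infer_instance
instance {n : ℕ} : DecidablePred (@Av312 n) := fun σ => by unfold Av312; infer_instance
instance {n : ℕ} : DecidablePred (@Good n) := fun σ => by unfold Good; infer_instance

noncomputable def Nc (c mm : ℕ) : ℕ :=
  Nat.card {τ : Equiv.Perm (Fin mm) // Good τ ∧ ∀ i : Fin mm, (i : ℕ) = 0 → (τ i : ℕ) = c}

lemma Nc_eq (c mm : ℕ) (z : Fin mm) (hz : (z : ℕ) = 0) :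
    Nc c mm = Nat.card {τ : Equiv.Perm (Fin mm) // Good τ ∧ (τ z : ℕ) = c} := by
  refine Nat.card_congr (Equiv.subtypeEquivRight fun τ => ?_)
  constructor
  · rintro ⟨hG, hA⟩; exact ⟨hG, hA z hz⟩
  · rintro ⟨hG, hA⟩
    refine ⟨hG, fun i hi => ?_⟩
    have : i = z := Fin.ext (by omega)
    rw [this]; exact hA


lemma class0 (m : ℕ) : Nc 0 (1 + m) = f m := by
  have hz : ((⟨0, by omega⟩ : Fin (1+m)) : ℕ) = 0 := rfl
  rw [Nc_eq 0 (1+m) ⟨0, by omega⟩ hz,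
    ← card_block 1 m 1 (by decide) (by decide) (by decide)]
  refine Nat.card_congr (Equiv.subtypeEquivRight fun τ => and_congr_right fun hG => ?_)
  constructor
  · intro hA i
    fin_cases i
    have hc : Fin.castAdd m (0 : Fin 1) = (⟨0, by omega⟩ : Fin (1+m)) := Fin.ext (by simp)
    show τ (Fin.castAdd m (0 : Fin 1)) = Fin.castAdd m ((1 : Equiv.Perm (Fin 1)) (0 : Fin 1))
    refine Fin.ext ?_
    rw [hc, hA]
    simp
  · intro hB
    have h := hB 0
    have hc : (⟨0, by omega⟩ : Fin (1+m)) = Fin.castAdd m (0 : Fin 1) := Fin.ext (by simp)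
    rw [hc, h]
    simp

lemma class1 (m : ℕ) : Nc 1 (2 + m) = f m := by
  have hz : ((⟨0, by omega⟩ : Fin (2+m)) : ℕ) = 0 := rfl
  rw [Nc_eq 1 (2+m) ⟨0, by omega⟩ hz,
    ← card_block 2 m (Equiv.swap 0 1) (Equiv.swap_mul_self 0 1) (by decide) (by decide)]
  refine Nat.card_congr (Equiv.subtypeEquivRight fun τ => and_congr_right fun hG => ?_)
  have hc0 : Fin.castAdd m (0 : Fin 2) = (⟨0, by omega⟩ : Fin (2+m)) := Fin.ext (by simp)
  constructor
  · intro hA i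
    have h0 : τ (Fin.castAdd m (0 : Fin 2)) = Fin.castAdd m (1 : Fin 2) := by
      refine Fin.ext ?_
      rw [hc0, hA]
      simp
    have h1 : τ (Fin.castAdd m (1 : Fin 2)) = Fin.castAdd m (0 : Fin 2) := by
      rw [← h0, invol_apply τ hG.1]
    fin_cases i
    · exact h0
    · exact h1
  · intro hB
    have h := hB 0
    rw [← hc0, h, show (Equiv.swap (0:Fin 2) 1) 0 = 1 from by decide]
    simp

lemma class2 (m : ℕ) : Nc 2 (3 + m) = f m := by
  have hz : ((⟨0, by omega⟩ : Fin (3+m)) : ℕ) = 0 := rfl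
  rw [Nc_eq 2 (3+m) ⟨0, by omega⟩ hz,
    ← card_block 3 m (Equiv.swap 0 2) (Equiv.swap_mul_self 0 2) (by decide) (by decide)]
  refine Nat.card_congr (Equiv.subtypeEquivRight fun τ => and_congr_right fun hG => ?_)
  have hc0 : Fin.castAdd m (0 : Fin 3) = (⟨0, by omega⟩ : Fin (3+m)) := Fin.ext (by simp)
  constructor
  · intro hA i
    have h0 : τ (Fin.castAdd m (0 : Fin 3)) = Fin.castAdd m (2 : Fin 3) := by
      refine Fin.ext ?_
      rw [hc0, hA]
      simp
    have h1 : τ (Fin.castAdd m (1 : Fin 3)) = Fin.castAdd m (1 : Fin 3) := by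
      have hs := (struct τ hG.1 hG.2.1 hG.2.2 ⟨0, by omega⟩ hz).2 hA (Fin.castAdd m (1 : Fin 3))
        (by simp)
      exact Fin.ext (by rw [hs]; simp)
    have h2 : τ (Fin.castAdd m (2 : Fin 3)) = Fin.castAdd m (0 : Fin 3) := by
      rw [← h0, invol_apply τ hG.1]
    fin_cases i
    · exact h0
    · exact h1
    · exact h2
  · intro hB
    have h := hB 0
    rw [← hc0, h, show (Equiv.swap (0:Fin 3) 2) 0 = 2 from by decide]
    simp

lemma partition (mm : ℕ) (hm : 0 < mm) : f mm = Nc 0 mm + Nc 1 mm + Nc 2 mm := by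
  classical
  set z : Fin mm := ⟨0, hm⟩ with hzdef
  have hz : (z : ℕ) = 0 := rfl
  rw [Nc_eq 0 mm z hz, Nc_eq 1 mm z hz, Nc_eq 2 mm z hz, f,
    Nat.card_eq_fintype_card, Nat.card_eq_fintype_card, Nat.card_eq_fintype_card,
    Nat.card_eq_fintype_card, Fintype.card_subtype, Fintype.card_subtype,
    Fintype.card_subtype, Fintype.card_subtype]
  have h0 := Finset.card_filter_add_card_filter_not
    (s := Finset.univ.filter (fun τ : Equiv.Perm (Fin mm) => Good τ))
    (p := fun τ => (τ z : ℕ) = 0)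
  have h1 := Finset.card_filter_add_card_filter_not
    (s := (Finset.univ.filter (fun τ : Equiv.Perm (Fin mm) => Good τ)).filter
      (fun τ => ¬ (τ z : ℕ) = 0))
    (p := fun τ => (τ z : ℕ) = 1)
  simp only [Finset.filter_filter] at h0 h1
  have e1' : Finset.univ.filter (fun τ : Equiv.Perm (Fin mm) =>
        (Good τ ∧ ¬ (τ z : ℕ) = 0) ∧ (τ z : ℕ) = 1)
      = Finset.univ.filter (fun τ => Good τ ∧ (τ z : ℕ) = 1) := by
    ext τ
    simp only [Finset.mem_filter, Finset.mem_univ, true_and]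
    constructor
    · rintro ⟨⟨hG, _⟩, h1'⟩; exact ⟨hG, h1'⟩
    · rintro ⟨hG, h1'⟩; exact ⟨⟨hG, by omega⟩, h1'⟩
  have e2 : Finset.univ.filter (fun τ : Equiv.Perm (Fin mm) =>
        (Good τ ∧ ¬ (τ z : ℕ) = 0) ∧ ¬ (τ z : ℕ) = 1)
      = Finset.univ.filter (fun τ => Good τ ∧ (τ z : ℕ) = 2) := by
    ext τ
    simp only [Finset.mem_filter, Finset.mem_univ, true_and]
    constructor
    · rintro ⟨⟨hG, h0'⟩, h1'⟩
      have := (struct τ hG.1 hG.2.1 hG.2.2 z hz).1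
      exact ⟨hG, by omega⟩
    · rintro ⟨hG, h2'⟩
      exact ⟨⟨hG, by omega⟩, by omega⟩
  rw [e1', e2] at h1
  omega

lemma frec (n : ℕ) : f (n + 3) = f (n + 2) + f (n + 1) + f n := by
  have h := partition (n + 3) (by omega)
  have e0 : Nc 0 (n + 3) = f (n + 2) := by
    rw [show n + 3 = 1 + (n + 2) by omega]; exact class0 (n + 2)
  have e1 : Nc 1 (n + 3) = f (n + 1) := by
    rw [show n + 3 = 2 + (n + 1) by omega]; exact class1 (n + 1)
  have e2 : Nc 2 (n + 3) = f n := by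
    rw [show n + 3 = 3 + n by omega]; exact class2 n
  rw [h, e0, e1, e2]


lemma fbase0 : f 0 = 1 := by rw [f, Nat.card_eq_fintype_card]; decide
lemma fbase1 : f 1 = 1 := by rw [f, Nat.card_eq_fintype_card]; decide
lemma fbase2 : f 2 = 2 := by rw [f, Nat.card_eq_fintype_card]; decide

lemma fmain (n : ℕ) : f n = trib (n + 2) := by
  have key : ∀ n, f n = trib (n + 2) ∧ f (n + 1) = trib (n + 3) ∧ f (n + 2) = trib (n + 4) := by
    intro n
    induction n with
    | zero => exact ⟨fbase0, fbase1, fbase2⟩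
    | succ k ih =>
      refine ⟨ih.2.1, ih.2.2, ?_⟩
      have : trib (k + 5) = trib (k + 4) + trib (k + 3) + trib (k + 2) := rfl
      rw [show k + 1 + 2 = k + 3 by omega, show k + 1 + 4 = k + 5 by omega, this,
        frec k, ih.1, ih.2.1, ih.2.2]
  exact (key n).1

lemma av312_iff_av231 {N : ℕ} (τ : Equiv.Perm (Fin N)) (h1 : τ * τ = 1) :
    Av312 τ ↔ Av231 τ := by
  have hinv := invol_apply τ h1
  constructor
  · intro h hc
    obtain ⟨i, j, k, hij, hjk, hki, hij'⟩ := hc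
    exact h ⟨τ k, τ i, τ j, hki, hij', by rw [hinv, hinv]; exact hij,
      by rw [hinv, hinv]; exact hjk⟩
  · intro h hc
    obtain ⟨i, j, k, hij, hjk, hjk', hki⟩ := hc
    exact h ⟨τ j, τ k, τ i, hjk', hki, by rw [hinv, hinv]; exact hij,
      by rw [hinv, hinv]; exact hjk⟩

theorem involutions_avoiding_4321_312 (n : ℕ) :
    (∀ τ : Equiv.Perm (Fin n), τ * τ = 1 →
      ((Av4321 τ ∧ Av312 τ) ↔ (Av4321 τ ∧ Av231 τ))) ∧
    Nat.card {τ : Equiv.Perm (Fin n) // τ * τ = 1 ∧ Av4321 τ ∧ Av312 τ} = trib (n + 2) := by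
  constructor
  · intro τ hτ
    exact and_congr_right fun _ => av312_iff_av231 τ hτ
  · have h := fmain n
    rw [f] at h
    exact (Nat.card_congr (Equiv.subtypeEquivRight fun τ => Iff.rfl)).trans h
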